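/- Let f : {0,1}ⁿ → ℝ satisfy condition (2.1) with constant v > 0, and for each integer k set q_k = P{f(X) ∈ [k, k+1)}. Then q_{k+1} ≤ q_k for every integer k ≥ E f(X) + (25/√5)·v. -/

import Mathlib

open scoped Classical
open Finset

/-- Probability of an event under the uniform distribution on `{0,1}ⁿ`. -/
noncomputable def prb {n : ℕ} (P : (Fin n → Fin 2) → Prop) : ℝ :=
  ((Finset.univ.filter P).card : ℝ) / 2 ^ n

/-- `x^{(i)}`: flip the `i`-th bit of `x`. -/
noncomputable def flipBit {n : ℕ} (x : Fin n → Fin 2) (i : Fin n) : Fin n → Fin 2 :=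
  Function.update x i (x i + 1)

/-- The `α`-quantile `Q_α = inf { z : P{f(X) ≤ z} ≥ α }`. -/
noncomputable def quant {n : ℕ} (f : (Fin n → Fin 2) → ℝ) (α : ℝ) : ℝ :=
  sInf {z : ℝ | α ≤ prb fun x => f x ≤ z}

/-- Expectation of `f(X)` for `X` uniform on `{0,1}ⁿ`. -/
noncomputable def expecb {n : ℕ} (f : (Fin n → Fin 2) → ℝ) : ℝ :=
  (∑ x, f x) / 2 ^ n

/-- Variance of `f(X)` for `X` uniform on `{0,1}ⁿ`. -/
noncomputable def varb {n : ℕ} (f : (Fin n → Fin 2) → ℝ) : ℝ :=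
  expecb fun x => (f x - expecb f) ^ 2

namespace Stmt5Aux
open Real

noncomputable def φr (u : ℝ) : ℝ := u * Real.log u

noncomputable def ent2 (u w : ℝ) : ℝ := (φr u + φr w) / 2 - φr ((u + w) / 2)

lemma φr_zero : φr 0 = 0 := by simp [φr]

lemma ent2_zero : ent2 0 0 = 0 := by simp [ent2, φr]

lemma ent2_symm (u w : ℝ) : ent2 u w = ent2 w u := by
  unfold ent2
  rw [add_comm (φr u), add_comm u w]

lemma ent2_kl (u w : ℝ) : 2 * ent2 u w
    = u * (Real.log u - Real.log ((u + w) / 2)) + w * (Real.log w - Real.log ((u + w) / 2)) := by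
  unfold ent2 φr; ring

lemma one_sub_inv_le_log {x : ℝ} (hx : 0 < x) : 1 - 1 / x ≤ Real.log x := by
  have h := Real.log_le_sub_one_of_pos (show (0:ℝ) < 1 / x by positivity)
  rw [one_div, Real.log_inv] at h
  rw [one_div]; linarith

lemma φr_half {u : ℝ} (hu : 0 ≤ u) : φr (u / 2) = φr u / 2 - u / 2 * Real.log 2 := by
  rcases eq_or_lt_of_le hu with h | h
  · simp [φr, ← h]
  · unfold φr
    rw [Real.log_div (ne_of_gt h) two_ne_zero]; ring

lemma ent2_half {u w : ℝ} (hu : 0 ≤ u) (hw : 0 ≤ w) :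
    ent2 (u / 2) (w / 2) = ent2 u w / 2 := by
  unfold ent2
  rw [φr_half hu, φr_half hw, show (u / 2 + w / 2) / 2 = ((u + w) / 2) / 2 by ring,
    φr_half (by positivity)]
  ring

lemma claim2 {a₀ a₁ b₀ b₁ : ℝ} (ha₀ : 0 ≤ a₀) (ha₁ : 0 ≤ a₁) (hb₀ : 0 < b₀) (hb₁ : 0 < b₁) :
    (a₀ + a₁) * (Real.log ((a₀ + a₁) / 2) - Real.log ((b₀ + b₁) / 2)) ≤
      a₀ * (Real.log a₀ - Real.log b₀) + a₁ * (Real.log a₁ - Real.log b₁) := by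
  rcases eq_or_lt_of_le (show (0:ℝ) ≤ a₀ + a₁ by linarith) with h | h
  · have h1 : a₀ = 0 := by linarith
    have h2 : a₁ = 0 := by linarith
    simp [h1, h2]
  · set A : ℝ := (a₀ + a₁) / 2 with hA
    set B : ℝ := (b₀ + b₁) / 2 with hB
    have hApos : 0 < A := by rw [hA]; linarith
    have hBpos : 0 < B := by rw [hB]; linarith
    have key : ∀ a b : ℝ, 0 ≤ a → 0 < b →
        a * (Real.log A - Real.log B) + a - b * (A / B) ≤ a * (Real.log a - Real.log b) := by
      intro a b ha hb
      rcases eq_or_lt_of_le ha with h0 | h0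
      · rw [← h0]
        have : 0 < b * (A / B) := by positivity
        simp; positivity
      · have hX : 0 < a * B / (b * A) := by positivity
        have hlog := one_sub_inv_le_log hX
        have e1 : Real.log (a * B / (b * A)) =
            Real.log a + Real.log B - (Real.log b + Real.log A) := by
          rw [Real.log_div (by positivity) (by positivity), Real.log_mul (ne_of_gt h0) (ne_of_gt hBpos),
            Real.log_mul (ne_of_gt hb) (ne_of_gt hApos)]
        have e2 : 1 / (a * B / (b * A)) = b * A / (a * B) := by
          field_simp
        rw [e1, e2] at hlog
        have hmul := mul_le_mul_of_nonneg_left hlog (le_of_lt h0)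
        have e3 : a * (b * A / (a * B)) = b * (A / B) := by
          field_simp
        nlinarith [hmul, e3]
    have k0 := key a₀ b₀ ha₀ hb₀
    have k1 := key a₁ b₁ ha₁ hb₁
    have e4 : b₀ * (A / B) + b₁ * (A / B) = a₀ + a₁ := by
      have h1 : (b₀ + b₁) * (A / B) = 2 * A := by
        rw [hB]; field_simp
      have h2A : 2 * A = a₀ + a₁ := by rw [hA]; ring
      linear_combination h1 + h2A
    linarith

lemma ent2_conv {u₀ u₁ w₀ w₁ : ℝ} (hu₀ : 0 ≤ u₀) (hu₁ : 0 ≤ u₁) (hw₀ : 0 ≤ w₀) (hw₁ : 0 ≤ w₁) :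
    2 * ent2 ((u₀ + u₁) / 2) ((w₀ + w₁) / 2) ≤ ent2 u₀ w₀ + ent2 u₁ w₁ := by
  rcases eq_or_lt_of_le (show (0:ℝ) ≤ u₀ + w₀ by linarith) with hm0 | hm0
  · have h1 : u₀ = 0 := by linarith
    have h2 : w₀ = 0 := by linarith
    rw [h1, h2, ent2_zero, show ((0:ℝ) + u₁) / 2 = u₁ / 2 by ring,
      show ((0:ℝ) + w₁) / 2 = w₁ / 2 by ring, ent2_half hu₁ hw₁]
    ring_nf
    linarith
  rcases eq_or_lt_of_le (show (0:ℝ) ≤ u₁ + w₁ by linarith) with hm1 | hm1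
  · have h1 : u₁ = 0 := by linarith
    have h2 : w₁ = 0 := by linarith
    rw [h1, h2, ent2_zero, show (u₀ + (0:ℝ)) / 2 = u₀ / 2 by ring,
      show (w₀ + (0:ℝ)) / 2 = w₀ / 2 by ring, ent2_half hu₀ hw₀]
    ring_nf
    linarith
  · have hb₀ : (0:ℝ) < (u₀ + w₀) / 2 := by linarith
    have hb₁ : (0:ℝ) < (u₁ + w₁) / 2 := by linarith
    have cu := claim2 hu₀ hu₁ hb₀ hb₁
    have cw := claim2 hw₀ hw₁ hb₀ hb₁
    have e0 := ent2_kl u₀ w₀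
    have e1 := ent2_kl u₁ w₁
    have e2 := ent2_kl ((u₀ + u₁) / 2) ((w₀ + w₁) / 2)
    have earg : ((u₀ + u₁) / 2 + (w₀ + w₁) / 2) / 2 = ((u₀ + w₀) / 2 + (u₁ + w₁) / 2) / 2 := by
      ring
    rw [earg] at e2
    -- combine
    have c2 : (u₀ + u₁) * (Real.log ((u₀ + u₁) / 2) - Real.log (((u₀ + w₀) / 2 + (u₁ + w₁) / 2) / 2))
        + (w₀ + w₁) * (Real.log ((w₀ + w₁) / 2) - Real.log (((u₀ + w₀) / 2 + (u₁ + w₁) / 2) / 2))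
        ≤ u₀ * (Real.log u₀ - Real.log ((u₀ + w₀) / 2)) + u₁ * (Real.log u₁ - Real.log ((u₁ + w₁) / 2))
        + (w₀ * (Real.log w₀ - Real.log ((u₀ + w₀) / 2)) + w₁ * (Real.log w₁ - Real.log ((u₁ + w₁) / 2))) := by
      linarith
    -- 2 * (2 * ent2 ū w̄) ≤ 2*ent2 u₀ w₀ + 2*ent2 u₁ w₁ ... need scaling:
    -- note LHS of c2 relates to e2: e2's RHS has ū = (u₀+u₁)/2 coefficients, i.e. half of c2's.
    nlinarith [c2, e0, e1, e2]

lemma ent2_le {u w : ℝ} (hu : 0 ≤ u) (hw : 0 ≤ w) : ent2 u w ≤ (u - w) ^ 2 / (2 * (u + w)) := by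
  rcases eq_or_lt_of_le (show (0:ℝ) ≤ u + w by linarith) with hm | hm
  · have h1 : u = 0 := by linarith
    have h2 : w = 0 := by linarith
    simp [h1, h2, ent2_zero]
  · have hmpos : (0:ℝ) < (u + w) / 2 := by linarith
    have hb : ∀ a : ℝ, 0 ≤ a → a * (Real.log a - Real.log ((u + w) / 2)) ≤ a * (a / ((u + w) / 2) - 1) := by
      intro a ha
      rcases eq_or_lt_of_le ha with h0 | h0
      · rw [← h0]; simp
      · apply mul_le_mul_of_nonneg_left _ ha
        have := Real.log_le_sub_one_of_pos (show (0:ℝ) < a / ((u + w) / 2) by positivity)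
        rw [Real.log_div (ne_of_gt h0) (ne_of_gt hmpos)] at this
        linarith
    have h1 := hb u hu
    have h2 := hb w hw
    have hkl := ent2_kl u w
    have expand : u * (u / ((u + w) / 2) - 1) + w * (w / ((u + w) / 2) - 1)
        = (u - w) ^ 2 / (u + w) := by
      field_simp
      ring
    have final : 2 * ent2 u w ≤ (u - w) ^ 2 / (u + w) := by
      rw [hkl]; rw [← expand]; linarith
    rw [show (u - w) ^ 2 / (2 * (u + w)) = ((u - w) ^ 2 / (u + w)) / 2 by
      rw [div_div]; ring_nf]
    linarith

lemma ent2_sq {p q : ℝ} (hp : 0 ≤ p) (hq : 0 ≤ q) : ent2 (p ^ 2) (q ^ 2) ≤ (p - q) ^ 2 := by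
  have h := ent2_le (sq_nonneg p) (sq_nonneg q)
  rcases eq_or_lt_of_le (show (0:ℝ) ≤ p ^ 2 + q ^ 2 by positivity) with hm | hm
  · have h1 : p = 0 := by nlinarith
    have h2 : q = 0 := by nlinarith
    simp [h1, h2, ent2_zero]
  · refine le_trans h ?_
    rw [div_le_iff₀ (by linarith)]
    nlinarith [sq_nonneg (p - q), sq_nonneg (p + q), sq_nonneg (p*p - q*q), mul_nonneg hp hq]

lemma ent2_exp_le {p q : ℝ} (hpq : q ≤ p) :
    ent2 (Real.exp p) (Real.exp q) ≤ (p - q) ^ 2 / 2 * Real.exp p := by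
  have h := ent2_le (le_of_lt (Real.exp_pos p)) (le_of_lt (Real.exp_pos q))
  refine le_trans h ?_
  have hd : Real.exp p - Real.exp q ≤ (p - q) * Real.exp p := by
    have h1 : Real.exp q = Real.exp p * Real.exp (q - p) := by
      rw [← Real.exp_add]; ring_nf
    have h2 : 1 + (q - p) ≤ Real.exp (q - p) := by
      have := Real.add_one_le_exp (q - p); linarith
    nlinarith [Real.exp_pos p]
  have hd0 : 0 ≤ Real.exp p - Real.exp q := by
    have := Real.exp_le_exp.2 hpq; linarith
  have hsq : (Real.exp p - Real.exp q) ^ 2 ≤ (p - q) ^ 2 * (Real.exp p) ^ 2 := by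
    nlinarith [hd, hd0]
  rw [div_le_iff₀ (by positivity)]
  have h3 : Real.exp p ≤ Real.exp p + Real.exp q := by nlinarith [Real.exp_pos q]
  nlinarith [Real.exp_pos p, Real.exp_pos q, sq_nonneg (p - q)]

lemma ent2_exp (p q : ℝ) : ent2 (Real.exp p) (Real.exp q)
    ≤ (max (p - q) 0) ^ 2 / 2 * Real.exp p + (max (q - p) 0) ^ 2 / 2 * Real.exp q := by
  rcases le_total q p with h | h
  · have h1 := ent2_exp_le h
    have e1 : max (p - q) 0 = p - q := max_eq_left (by linarith)
    rw [e1]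
    have : (0:ℝ) ≤ (max (q - p) 0) ^ 2 / 2 * Real.exp q := by positivity
    linarith
  · have h1 := ent2_exp_le h
    rw [ent2_symm]
    have e1 : max (q - p) 0 = q - p := max_eq_left (by linarith)
    rw [e1]
    have : (0:ℝ) ≤ (max (p - q) 0) ^ 2 / 2 * Real.exp p := by positivity
    linarith

lemma log_le_div_e {t : ℝ} (ht : 0 < t) : Real.log t ≤ t * Real.exp (-1) := by
  have h := Real.add_one_le_exp (Real.log t - 1)
  rw [Real.exp_sub, Real.exp_log ht] at h
  have : Real.exp (-1) = 1 / Real.exp 1 := by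
    rw [Real.exp_neg]; ring
  rw [this]
  rw [mul_one_div, le_div_iff₀ (Real.exp_pos 1)]
  rw [show log t - 1 + 1 = log t by ring, le_div_iff₀ (Real.exp_pos 1)] at h
  exact h

lemma φr_ge {u : ℝ} (hu : 0 ≤ u) : -Real.exp (-1) ≤ φr u := by
  rcases eq_or_lt_of_le hu with h0 | h0
  · rw [← h0, φr_zero]
    have := Real.exp_pos (-1 : ℝ); linarith
  · unfold φr
    have h1 : Real.log (1 / u) ≤ (1 / u) * Real.exp (-1) := log_le_div_e (by positivity)
    rw [one_div, Real.log_inv] at h1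
    have := mul_le_mul_of_nonneg_left h1 (le_of_lt h0)
    have e : u * (u⁻¹ * Real.exp (-1)) = Real.exp (-1) := by
      field_simp
    nlinarith [this]

lemma fin2_aa (a : Fin 2) : a + 1 + 1 = a := by
  revert a; decide

lemma flipBit_flipBit {n : ℕ} (x : Fin n → Fin 2) (i : Fin n) :
    flipBit (flipBit x i) i = x := by
  unfold flipBit
  rw [Function.update_self, Function.update_idem, fin2_aa, Function.update_eq_self]

lemma flipBit_invol {n : ℕ} (i : Fin n) : Function.Involutive (fun x => flipBit x i) :=
  fun x => flipBit_flipBit x i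

lemma sum_flipBit {n : ℕ} (i : Fin n) (F : (Fin n → Fin 2) → ℝ) :
    ∑ x, F (flipBit x i) = ∑ x, F x :=
  Fintype.sum_bijective _ (flipBit_invol i).bijective _ _ (fun _ => rfl)

lemma flipBit_cons_zero {n : ℕ} (c : Fin 2) (y : Fin n → Fin 2) :
    flipBit (Fin.cons c y) 0 = Fin.cons (c + 1) y := by
  unfold flipBit
  rw [Fin.cons_zero, Fin.update_cons_zero]

lemma flipBit_cons_succ {n : ℕ} (c : Fin 2) (y : Fin n → Fin 2) (i : Fin n) :
    flipBit (Fin.cons c y) i.succ = Fin.cons c (flipBit y i) := by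
  unfold flipBit
  rw [Fin.cons_succ, Fin.cons_update]

lemma sum_cube_succ {n : ℕ} (F : (Fin (n + 1) → Fin 2) → ℝ) :
    ∑ x, F x = ∑ y : Fin n → Fin 2, (F (Fin.cons 0 y) + F (Fin.cons 1 y)) := by
  rw [← (Fin.consEquiv (fun _ : Fin (n+1) => Fin 2)).sum_comp F]
  rw [Fintype.sum_prod_type]
  rw [Fin.sum_univ_two]
  rw [← Finset.sum_add_distrib]
  rfl

lemma tensor : ∀ (n : ℕ) (h : (Fin n → Fin 2) → ℝ), (∀ x, 0 ≤ h x) →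
    (∑ x, φr (h x)) - (∑ x, h x) * (Real.log (∑ x, h x) - n * Real.log 2)
      ≤ ∑ x, ∑ i, ent2 (h x) (h (flipBit x i)) := by
  intro n
  induction n with
  | zero =>
    intro h hpos
    have e1 : ∀ F : (Fin 0 → Fin 2) → ℝ, ∑ x, F x = F (fun i => i.elim0) := fun F =>
      Fintype.sum_subsingleton _ _
    rw [e1 (fun x => φr (h x)), e1 h, e1 (fun x => ∑ i, ent2 (h x) (h (flipBit x i)))]
    simp [φr]
  | succ n IH =>
    intro h hpos
    rcases eq_or_lt_of_le (Finset.sum_nonneg (fun x _ => hpos x)) with hS0 | hS0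
    · have hz : ∀ x, h x = 0 := by
        intro x
        have := (Finset.sum_eq_zero_iff_of_nonneg (fun i _ => hpos i)).1 hS0.symm
        exact this x (Finset.mem_univ x)
      simp [hz, φr, ent2, φr_zero]
    · -- abbreviations are kept inline
      have hIH := IH (fun y => (h (Fin.cons 0 y) + h (Fin.cons 1 y)) / 2)
        (fun y => by
          have a := hpos (Fin.cons 0 y); have b := hpos (Fin.cons 1 y); positivity)
      have hSb : ∑ y : Fin n → Fin 2, (h (Fin.cons 0 y) + h (Fin.cons 1 y)) / 2
          = (∑ x, h x) / 2 := by
        rw [← Finset.sum_div, ← sum_cube_succ h]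
      rw [hSb] at hIH
      have hlog : Real.log ((∑ x, h x) / 2) = Real.log (∑ x, h x) - Real.log 2 :=
        Real.log_div (ne_of_gt hS0) two_ne_zero
      rw [hlog] at hIH
      -- φ decomposition
      have e_phi : ∑ x, φr (h x)
          = 2 * (∑ y : Fin n → Fin 2, ent2 (h (Fin.cons 0 y)) (h (Fin.cons 1 y)))
            + 2 * ∑ y : Fin n → Fin 2, φr ((h (Fin.cons 0 y) + h (Fin.cons 1 y)) / 2) := by
        rw [sum_cube_succ (fun x => φr (h x))]
        rw [Finset.mul_sum, Finset.mul_sum, ← Finset.sum_add_distrib]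
        apply Finset.sum_congr rfl
        intro y _
        unfold ent2
        ring
      -- RHS decomposition
      have e_R : (∑ x, ∑ i, ent2 (h x) (h (flipBit x i)))
          = 2 * (∑ y : Fin n → Fin 2, ent2 (h (Fin.cons 0 y)) (h (Fin.cons 1 y)))
            + ∑ y : Fin n → Fin 2, ∑ j : Fin n,
              (ent2 (h (Fin.cons 0 y)) (h (Fin.cons 0 (flipBit y j)))
               + ent2 (h (Fin.cons 1 y)) (h (Fin.cons 1 (flipBit y j)))) := by
        rw [sum_cube_succ (fun x => ∑ i, ent2 (h x) (h (flipBit x i)))]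
        rw [Finset.mul_sum, ← Finset.sum_add_distrib]
        apply Finset.sum_congr rfl
        intro y _
        simp only [Fin.sum_univ_succ]
        rw [flipBit_cons_zero, flipBit_cons_zero]
        have c01 : (0 : Fin 2) + 1 = 1 := rfl
        have c10 : (1 : Fin 2) + 1 = 0 := rfl
        rw [c01, c10]
        have efl : ∀ c : Fin 2, ∀ i : Fin n,
            flipBit (Fin.cons c y) i.succ = Fin.cons c (flipBit y i) := fun c i =>
          flipBit_cons_succ c y i
        simp only [efl]
        rw [ent2_symm (h (Fin.cons 1 y)) (h (Fin.cons 0 y))]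
        rw [Finset.sum_add_distrib]
        ring
      -- convexity bound on IH right side
      have hconv : ∑ y : Fin n → Fin 2, ∑ j : Fin n,
            2 * ent2 ((h (Fin.cons 0 y) + h (Fin.cons 1 y)) / 2)
              ((h (Fin.cons 0 (flipBit y j)) + h (Fin.cons 1 (flipBit y j))) / 2)
          ≤ ∑ y : Fin n → Fin 2, ∑ j : Fin n,
              (ent2 (h (Fin.cons 0 y)) (h (Fin.cons 0 (flipBit y j)))
               + ent2 (h (Fin.cons 1 y)) (h (Fin.cons 1 (flipBit y j)))) := by
        apply Finset.sum_le_sum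
        intro y _
        apply Finset.sum_le_sum
        intro j _
        exact ent2_conv (hpos _) (hpos _) (hpos _) (hpos _)
      have hIH2 : 2 * (∑ y : Fin n → Fin 2, φr ((h (Fin.cons 0 y) + h (Fin.cons 1 y)) / 2))
            - 2 * (((∑ x, h x) / 2) * ((Real.log (∑ x, h x) - Real.log 2) - n * Real.log 2))
          ≤ ∑ y : Fin n → Fin 2, ∑ j : Fin n,
            2 * ent2 ((h (Fin.cons 0 y) + h (Fin.cons 1 y)) / 2)
              ((h (Fin.cons 0 (flipBit y j)) + h (Fin.cons 1 (flipBit y j))) / 2) := by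
        have := mul_le_mul_of_nonneg_left hIH (by norm_num : (0:ℝ) ≤ 2)
        rw [Finset.mul_sum] at this
        calc 2 * (∑ y : Fin n → Fin 2, φr ((h (Fin.cons 0 y) + h (Fin.cons 1 y)) / 2))
              - 2 * (((∑ x, h x) / 2) * ((Real.log (∑ x, h x) - Real.log 2) - n * Real.log 2))
            = 2 * ((∑ y : Fin n → Fin 2, φr ((h (Fin.cons 0 y) + h (Fin.cons 1 y)) / 2))
              - ((∑ x, h x) / 2) * ((Real.log (∑ x, h x) - Real.log 2) - n * Real.log 2)) := by ring
          _ ≤ 2 * ∑ y : Fin n → Fin 2, ∑ j : Fin n,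
                ent2 ((h (Fin.cons 0 y) + h (Fin.cons 1 y)) / 2)
                  ((h (Fin.cons 0 (flipBit y j)) + h (Fin.cons 1 (flipBit y j))) / 2) := by
              exact mul_le_mul_of_nonneg_left hIH (by norm_num)
          _ = ∑ y : Fin n → Fin 2, ∑ j : Fin n,
                2 * ent2 ((h (Fin.cons 0 y) + h (Fin.cons 1 y)) / 2)
                  ((h (Fin.cons 0 (flipBit y j)) + h (Fin.cons 1 (flipBit y j))) / 2) := by
              rw [Finset.mul_sum]
              apply Finset.sum_congr rfl
              intro y _
              rw [Finset.mul_sum]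
      -- log algebra to match
      have ecast : ((n : ℝ) + 1) = ((n + 1 : ℕ) : ℝ) := by push_cast; ring
      have ealg : (∑ x, h x) * (Real.log (∑ x, h x) - ((n + 1 : ℕ) : ℝ) * Real.log 2)
          = 2 * (((∑ x, h x) / 2) * ((Real.log (∑ x, h x) - Real.log 2) - n * Real.log 2)) := by
        rw [← ecast]; ring
      rw [ealg, e_phi, e_R]
      linarith [le_trans hIH2 hconv]

section Herbst

variable {n : ℕ}

lemma S_pos (f : (Fin n → Fin 2) → ℝ) (l : ℝ) :
    0 < ∑ x : Fin n → Fin 2, Real.exp (l * f x) :=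
  Finset.sum_pos (fun x _ => Real.exp_pos _) Finset.univ_nonempty

lemma S_hasDeriv (f : (Fin n → Fin 2) → ℝ) (l : ℝ) :
    HasDerivAt (fun t => ∑ x : Fin n → Fin 2, Real.exp (t * f x))
      (∑ x : Fin n → Fin 2, f x * Real.exp (l * f x)) l := by
  apply HasDerivAt.fun_sum
  intro x _
  have h1 : HasDerivAt (fun t : ℝ => t * f x) (f x) l := hasDerivAt_mul_const (f x)
  have h2 := h1.exp
  simpa [mul_comm] using h2

lemma herbst_key (f : (Fin n → Fin 2) → ℝ) (v : ℝ)
    (hcond : ∀ x, ∑ i, (max (f x - f (flipBit x i)) 0) ^ 2 ≤ v)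
    (l : ℝ) (hl : 0 ≤ l) :
    l * (∑ x : Fin n → Fin 2, f x * Real.exp (l * f x))
      - (∑ x : Fin n → Fin 2, Real.exp (l * f x)) *
          (Real.log (∑ x : Fin n → Fin 2, Real.exp (l * f x)) - n * Real.log 2)
      ≤ v * l ^ 2 * ∑ x : Fin n → Fin 2, Real.exp (l * f x) := by
  have T := tensor n (fun x => Real.exp (l * f x)) (fun x => (Real.exp_pos _).le)
  have e_phi : ∑ x : Fin n → Fin 2, φr (Real.exp (l * f x))
      = l * ∑ x : Fin n → Fin 2, f x * Real.exp (l * f x) := by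
    rw [Finset.mul_sum]
    apply Finset.sum_congr rfl
    intro x _
    unfold φr
    rw [Real.log_exp]
    ring
  rw [e_phi] at T
  refine le_trans T ?_
  -- bound the double sum of ent2
  have step1 : ∑ x : Fin n → Fin 2, ∑ i, ent2 (Real.exp (l * f x)) (Real.exp (l * f (flipBit x i)))
      ≤ ∑ x : Fin n → Fin 2, ∑ i,
          ((max (l * f x - l * f (flipBit x i)) 0) ^ 2 / 2 * Real.exp (l * f x)
           + (max (l * f (flipBit x i) - l * f x) 0) ^ 2 / 2 * Real.exp (l * f (flipBit x i))) := by
    apply Finset.sum_le_sum; intro x _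
    apply Finset.sum_le_sum; intro i _
    exact ent2_exp (l * f x) (l * f (flipBit x i))
  refine le_trans step1 ?_
  have split : ∑ x : Fin n → Fin 2, ∑ i,
          ((max (l * f x - l * f (flipBit x i)) 0) ^ 2 / 2 * Real.exp (l * f x)
           + (max (l * f (flipBit x i) - l * f x) 0) ^ 2 / 2 * Real.exp (l * f (flipBit x i)))
      = ∑ x : Fin n → Fin 2, ∑ i,
          (max (l * f x - l * f (flipBit x i)) 0) ^ 2 * Real.exp (l * f x) := by
    rw [Finset.sum_comm]
    conv_rhs => rw [Finset.sum_comm]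
    apply Finset.sum_congr rfl
    intro i _
    rw [Finset.sum_add_distrib]
    have e2 : ∑ x : Fin n → Fin 2,
        (max (l * f (flipBit x i) - l * f x) 0) ^ 2 / 2 * Real.exp (l * f (flipBit x i))
        = ∑ x : Fin n → Fin 2,
        (max (l * f x - l * f (flipBit x i)) 0) ^ 2 / 2 * Real.exp (l * f x) := by
      have := sum_flipBit i (fun z => (max (l * f z - l * f (flipBit z i)) 0) ^ 2 / 2 * Real.exp (l * f z))
      simp only [flipBit_flipBit] at this
      exact this
    rw [e2, ← Finset.sum_add_distrib]
    apply Finset.sum_congr rfl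
    intro x _
    ring
  rw [split]
  have pointwise : ∀ x : Fin n → Fin 2,
      ∑ i, (max (l * f x - l * f (flipBit x i)) 0) ^ 2 * Real.exp (l * f x)
        ≤ v * l ^ 2 * Real.exp (l * f x) := by
    intro x
    have e3 : ∀ i : Fin n, (max (l * f x - l * f (flipBit x i)) 0) ^ 2
        = l ^ 2 * (max (f x - f (flipBit x i)) 0) ^ 2 := by
      intro i
      have : l * f x - l * f (flipBit x i) = l * (f x - f (flipBit x i)) := by ring
      rw [this, ← mul_zero l, ← mul_max_of_nonneg _ _ hl, mul_zero]
      ring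
    calc ∑ i, (max (l * f x - l * f (flipBit x i)) 0) ^ 2 * Real.exp (l * f x)
        = (l ^ 2 * ∑ i, (max (f x - f (flipBit x i)) 0) ^ 2) * Real.exp (l * f x) := by
          rw [Finset.mul_sum, Finset.sum_mul]
          apply Finset.sum_congr rfl
          intro i _
          rw [e3 i]
      _ ≤ (l ^ 2 * v) * Real.exp (l * f x) := by
          apply mul_le_mul_of_nonneg_right _ (Real.exp_pos _).le
          exact mul_le_mul_of_nonneg_left (hcond x) (sq_nonneg l)
      _ = v * l ^ 2 * Real.exp (l * f x) := by ring
  calc ∑ x : Fin n → Fin 2, ∑ i, (max (l * f x - l * f (flipBit x i)) 0) ^ 2 * Real.exp (l * f x)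
      ≤ ∑ x : Fin n → Fin 2, v * l ^ 2 * Real.exp (l * f x) :=
        Finset.sum_le_sum (fun x _ => pointwise x)
    _ = v * l ^ 2 * ∑ x : Fin n → Fin 2, Real.exp (l * f x) := by
        rw [Finset.mul_sum]

lemma mgf_le (f : (Fin n → Fin 2) → ℝ) (v : ℝ)
    (hcond : ∀ x, ∑ i, (max (f x - f (flipBit x i)) 0) ^ 2 ≤ v)
    (l : ℝ) (hl : 0 ≤ l) :
    Real.log (∑ x : Fin n → Fin 2, Real.exp (l * f x)) - n * Real.log 2
      ≤ l * ((∑ x : Fin n → Fin 2, f x) / 2 ^ n) + v * l ^ 2 := by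
  have hcardcube : (Fintype.card (Fin n → Fin 2)) = 2 ^ n := by
    rw [Fintype.card_fun, Fintype.card_fin, Fintype.card_fin]
  have hS1 : (∑ x : Fin n → Fin 2, Real.exp (0 * f x)) = (2 : ℝ) ^ n := by
    simp [Finset.card_univ, hcardcube]
  rcases eq_or_lt_of_le hl with h0 | h0
  · rw [← h0, hS1]
    rw [Real.log_pow]
    simp
  · set L : ℝ → ℝ := fun t => Real.log (∑ x : Fin n → Fin 2, Real.exp (t * f x)) - n * Real.log 2
      with hL
    have hLd : ∀ t : ℝ, HasDerivAt L
        ((∑ x : Fin n → Fin 2, f x * Real.exp (t * f x)) /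
          (∑ x : Fin n → Fin 2, Real.exp (t * f x))) t := by
      intro t
      exact ((S_hasDeriv f t).log (ne_of_gt (S_pos f t))).sub_const _
    set G : ℝ → ℝ := fun t => L t / t - v * t with hG
    have hGd : ∀ t : ℝ, t ≠ 0 → HasDerivAt G
        ((((∑ x : Fin n → Fin 2, f x * Real.exp (t * f x)) /
            (∑ x : Fin n → Fin 2, Real.exp (t * f x))) * t - L t * 1) / t ^ 2 - v * 1) t := by
      intro t ht
      exact (((hLd t).div (hasDerivAt_id t) ht)).sub ((hasDerivAt_id t).const_mul v)
    have hG'le : ∀ t : ℝ, 0 < t → deriv G t ≤ 0 := by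
      intro t ht
      rw [(hGd t (ne_of_gt ht)).deriv]
      have hkey := herbst_key f v hcond t (le_of_lt ht)
      have hSpos := S_pos f t
      have h1 : ((∑ x : Fin n → Fin 2, f x * Real.exp (t * f x)) * t -
            (∑ x : Fin n → Fin 2, Real.exp (t * f x)) *
              (Real.log (∑ x : Fin n → Fin 2, Real.exp (t * f x)) - n * Real.log 2)) /
            (∑ x : Fin n → Fin 2, Real.exp (t * f x)) ≤ v * t ^ 2 := by
        rw [div_le_iff₀ hSpos]
        nlinarith [hkey]
      rw [sub_div, mul_div_cancel_left₀ _ (ne_of_gt hSpos)] at h1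
      have h2 : ((∑ x : Fin n → Fin 2, f x * Real.exp (t * f x)) /
            (∑ x : Fin n → Fin 2, Real.exp (t * f x))) * t - L t * 1 ≤ v * t ^ 2 := by
        rw [hL]
        simp only [mul_one]
        rw [div_mul_eq_mul_div]
        exact h1
      have ht2 : (0:ℝ) < t ^ 2 := by positivity
      rw [sub_nonpos.symm] at *
      have h3 : (((∑ x : Fin n → Fin 2, f x * Real.exp (t * f x)) /
            (∑ x : Fin n → Fin 2, Real.exp (t * f x))) * t - L t * 1) / t ^ 2 ≤ v := by
        rw [div_le_iff₀ ht2]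
        nlinarith [h2]
      linarith
    have hanti : AntitoneOn G (Set.Ioi (0:ℝ)) := by
      apply antitoneOn_of_deriv_nonpos (convex_Ioi 0)
      · intro t ht
        exact (hGd t (ne_of_gt ht)).continuousAt.continuousWithinAt
      · intro t ht
        rw [interior_Ioi] at ht
        exact (hGd t (ne_of_gt ht)).differentiableAt.differentiableWithinAt
      · intro t ht
        rw [interior_Ioi] at ht
        exact hG'le t ht
    have hL0 : L 0 = 0 := by
      rw [hL]
      simp only
      rw [hS1, Real.log_pow]
      simp
    have hslope : Filter.Tendsto (fun ε : ℝ => L ε / ε)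
        (nhdsWithin 0 (Set.Ioi 0)) (nhds ((∑ x : Fin n → Fin 2, f x) / 2 ^ n)) := by
      have hd0 := hLd 0
      have e0 : (∑ x : Fin n → Fin 2, f x * Real.exp (0 * f x)) /
          (∑ x : Fin n → Fin 2, Real.exp (0 * f x)) = (∑ x : Fin n → Fin 2, f x) / 2 ^ n := by
        rw [hS1]
        congr 1
        apply Finset.sum_congr rfl
        intro x _
        simp
      rw [e0] at hd0
      have hts := hasDerivAt_iff_tendsto_slope.1 hd0
      have hts2 : Filter.Tendsto (slope L 0) (nhdsWithin 0 (Set.Ioi 0))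
          (nhds ((∑ x : Fin n → Fin 2, f x) / 2 ^ n)) :=
        hts.mono_left (nhdsWithin_mono _ (fun x hx => ne_of_gt hx))
      apply hts2.congr'
      filter_upwards [self_mem_nhdsWithin] with ε hε
      rw [slope_def_field, hL0]
      simp
    have htend : Filter.Tendsto (fun ε : ℝ => L ε / ε - v * ε) (nhdsWithin 0 (Set.Ioi 0))
        (nhds ((∑ x : Fin n → Fin 2, f x) / 2 ^ n)) := by
      have h2 : Filter.Tendsto (fun ε : ℝ => v * ε) (nhdsWithin 0 (Set.Ioi 0)) (nhds 0) := by
        have : Filter.Tendsto (fun ε : ℝ => v * ε) (nhds 0) (nhds (v * 0)) :=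
          (continuous_const.mul continuous_id).tendsto 0
        rw [mul_zero] at this
        exact this.mono_left nhdsWithin_le_nhds
      simpa using hslope.sub h2
    have hev : ∀ᶠ ε in nhdsWithin (0:ℝ) (Set.Ioi 0), G l ≤ L ε / ε - v * ε := by
      filter_upwards [Ioc_mem_nhdsGT h0] with ε hε
      exact hanti (Set.mem_Ioi.2 hε.1) (Set.mem_Ioi.2 h0) hε.2
    have hfinal : G l ≤ (∑ x : Fin n → Fin 2, f x) / 2 ^ n := ge_of_tendsto htend hev
    rw [hG] at hfinal
    simp only at hfinal
    have h4 : L l / l ≤ (∑ x : Fin n → Fin 2, f x) / 2 ^ n + v * l := by linarith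
    have h5 := (div_le_iff₀ h0).1 h4
    rw [hL] at h5
    simp only at h5
    calc Real.log (∑ x : Fin n → Fin 2, Real.exp (l * f x)) - n * Real.log 2
        ≤ ((∑ x : Fin n → Fin 2, f x) / 2 ^ n + v * l) * l := h5
      _ = l * ((∑ x : Fin n → Fin 2, f x) / 2 ^ n) + v * l ^ 2 := by ring

lemma chernoff (f : (Fin n → Fin 2) → ℝ) (v : ℝ)
    (hcond : ∀ x, ∑ i, (max (f x - f (flipBit x i)) 0) ^ 2 ≤ v)
    (t l : ℝ) (hl : 0 ≤ l) :
    prb (fun x => t ≤ f x)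
      ≤ Real.exp (l * ((∑ x : Fin n → Fin 2, f x) / 2 ^ n) + v * l ^ 2 - l * t) := by
  have hSpos := S_pos f l
  have hcount : ((Finset.univ.filter (fun x : Fin n → Fin 2 => t ≤ f x)).card : ℝ)
      ≤ ∑ x : Fin n → Fin 2, Real.exp (l * f x - l * t) := by
    have e1 : ((Finset.univ.filter (fun x : Fin n → Fin 2 => t ≤ f x)).card : ℝ)
        = ∑ _x ∈ Finset.univ.filter (fun x : Fin n → Fin 2 => t ≤ f x), (1:ℝ) := by simp
    rw [e1]
    refine le_trans (Finset.sum_le_sum ?_)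
      (Finset.sum_le_sum_of_subset_of_nonneg (Finset.filter_subset _ _)
        (fun x _ _ => (Real.exp_pos _).le))
    intro x hx
    rw [Finset.mem_filter] at hx
    have h2 : 0 ≤ l * f x - l * t := by nlinarith [hx.2]
    calc (1:ℝ) = Real.exp 0 := by simp
      _ ≤ Real.exp (l * f x - l * t) := Real.exp_le_exp.2 h2
  have e2 : ∑ x : Fin n → Fin 2, Real.exp (l * f x - l * t)
      = Real.exp (-(l * t)) * ∑ x : Fin n → Fin 2, Real.exp (l * f x) := by
    rw [Finset.mul_sum]
    apply Finset.sum_congr rfl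
    intro x _
    rw [← Real.exp_add]
    ring_nf
  have hmgf := mgf_le f v hcond l hl
  have e4 : Real.exp (Real.log (∑ x : Fin n → Fin 2, Real.exp (l * f x)) - n * Real.log 2)
      = (∑ x : Fin n → Fin 2, Real.exp (l * f x)) / 2 ^ n := by
    rw [Real.exp_sub, Real.exp_log hSpos, ← Real.log_pow,
      Real.exp_log (pow_pos two_pos n)]
  unfold prb
  calc ((Finset.univ.filter (fun x : Fin n → Fin 2 => t ≤ f x)).card : ℝ) / 2 ^ n
      ≤ (Real.exp (-(l * t)) * ∑ x : Fin n → Fin 2, Real.exp (l * f x)) / 2 ^ n := by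
        rw [← e2]
        exact div_le_div_of_nonneg_right hcount (by positivity)
    _ = Real.exp (-(l * t)) * Real.exp (Real.log (∑ x : Fin n → Fin 2, Real.exp (l * f x)) - n * Real.log 2) := by
        rw [e4]; ring
    _ ≤ Real.exp (-(l * t)) * Real.exp (l * ((∑ x : Fin n → Fin 2, f x) / 2 ^ n) + v * l ^ 2) :=
        mul_le_mul_of_nonneg_left (Real.exp_le_exp.2 hmgf) (Real.exp_pos _).le
    _ = Real.exp (l * ((∑ x : Fin n → Fin 2, f x) / 2 ^ n) + v * l ^ 2 - l * t) := by
        rw [← Real.exp_add]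
        ring_nf

end Herbst
section Clamp

variable {n : ℕ}

lemma sq_decomp (d : ℝ) : d ^ 2 = (max d 0) ^ 2 + (max (-d) 0) ^ 2 := by
  rcases le_total 0 d with h | h
  · rw [max_eq_left h, max_eq_right (by linarith : -d ≤ 0)]
    ring
  · rw [max_eq_right h, max_eq_left (by linarith : 0 ≤ -d)]
    ring

lemma clamp_entropy (f : (Fin n → Fin 2) → ℝ) (v : ℝ)
    (hcond : ∀ x, ∑ i, (max (f x - f (flipBit x i)) 0) ^ 2 ≤ v) (K : ℝ) :
    ((Finset.univ.filter (fun x : Fin n → Fin 2 => K + 1 ≤ f x)).card : ℝ) *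
        (n * Real.log 2 - Real.log ((Finset.univ.filter (fun x : Fin n → Fin 2 => K < f x)).card : ℝ))
      ≤ ((Finset.univ.filter (fun x : Fin n → Fin 2 => K < f x)).card : ℝ) *
          (2 * v + Real.exp (-1)) := by
  set g : (Fin n → Fin 2) → ℝ := fun x => max 0 (min (f x - K) 1) with hgdef
  have hg0 : ∀ x, 0 ≤ g x := fun x => le_max_left 0 _
  have hg1 : ∀ x, g x ≤ 1 := fun x => max_le zero_le_one (min_le_right _ _)
  have hgone : ∀ x, K + 1 ≤ f x → g x = 1 := by
    intro x hx
    rw [hgdef]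
    simp only
    rw [min_eq_right (by linarith : (1:ℝ) ≤ f x - K), max_eq_right zero_le_one]
  have hgzero : ∀ x, ¬ K < f x → g x = 0 := by
    intro x hx
    push_neg at hx
    rw [hgdef]
    simp only
    rw [max_eq_left]
    exact le_trans (min_le_left _ _) (by linarith)
  have hmono : ∀ x y : Fin n → Fin 2, f x ≤ f y → g x ≤ g y := by
    intro x y hxy
    exact max_le_max le_rfl (min_le_min (by linarith) le_rfl)
  have hLip : ∀ x y : Fin n → Fin 2, max (g x - g y) 0 ≤ max (f x - f y) 0 := by
    intro x y
    rcases le_total (f x) (f y) with h | h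
    · have := hmono x y h
      rw [max_eq_right (by linarith : g x - g y ≤ 0)]
      exact le_max_right _ _
    · refine max_le ?_ (le_max_right _ _)
      refine le_trans ?_ (le_max_left (f x - f y) 0)
      rw [hgdef]
      simp only
      rcases le_total (f x - K) 1 with h1 | h1 <;> rcases le_total (f y - K) 1 with h2 | h2 <;>
        rcases le_total (0:ℝ) (f x - K) with h3 | h3 <;> rcases le_total (0:ℝ) (f y - K) with h4 | h4 <;>
        simp [min_eq_left, min_eq_right, max_eq_left, max_eq_right, h1, h2, h3, h4] <;>
        (try rw [min_eq_left h1]) <;> (try rw [min_eq_right h1]) <;>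
        (try rw [min_eq_left h2]) <;> (try rw [min_eq_right h2]) <;>
        (try rw [max_eq_right h3]) <;> (try rw [max_eq_left h3]) <;>
        (try rw [max_eq_right h4]) <;> (try rw [max_eq_left h4]) <;> linarith
  have hgrad : ∀ x, ∑ i, (max (g x - g (flipBit x i)) 0) ^ 2
      ≤ v * (if K < f x then 1 else 0) := by
    intro x
    by_cases hx : K < f x
    · rw [if_pos hx, mul_one]
      refine le_trans (Finset.sum_le_sum (fun i _ => ?_)) (hcond x)
      exact pow_le_pow_left₀ (le_max_right _ _) (hLip x (flipBit x i)) 2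
    · rw [if_neg hx, mul_zero]
      have : ∀ i : Fin n, (max (g x - g (flipBit x i)) 0) ^ 2 = 0 := by
        intro i
        rw [hgzero x hx]
        rw [max_eq_right (by
          have := hg0 (flipBit x i); linarith)]
        simp
      rw [Finset.sum_congr rfl (fun i _ => this i)]
      simp
  -- notation
  set Ac : ℝ := ((Finset.univ.filter (fun x : Fin n → Fin 2 => K + 1 ≤ f x)).card : ℝ) with hAc
  set Bc : ℝ := ((Finset.univ.filter (fun x : Fin n → Fin 2 => K < f x)).card : ℝ) with hBc
  set T : ℝ := ∑ x : Fin n → Fin 2, g x ^ 2 with hT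
  have hBc0 : 0 ≤ Bc := by rw [hBc]; positivity
  have hsum_ind : ∑ x : Fin n → Fin 2, (if K < f x then (1:ℝ) else 0) = Bc := by
    rw [hBc, Finset.sum_boole]
  -- tensor
  have htens := tensor n (fun x => g x ^ 2) (fun x => sq_nonneg _)
  -- upper bound on the RHS of htens
  have hup : ∑ x : Fin n → Fin 2, ∑ i, ent2 (g x ^ 2) (g (flipBit x i) ^ 2) ≤ 2 * v * Bc := by
    have s1 : ∑ x : Fin n → Fin 2, ∑ i, ent2 (g x ^ 2) (g (flipBit x i) ^ 2)
        ≤ ∑ x : Fin n → Fin 2, ∑ i, (g x - g (flipBit x i)) ^ 2 :=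
      Finset.sum_le_sum (fun x _ => Finset.sum_le_sum (fun i _ =>
        ent2_sq (hg0 x) (hg0 (flipBit x i))))
    refine le_trans s1 ?_
    have s2 : ∑ x : Fin n → Fin 2, ∑ i, (g x - g (flipBit x i)) ^ 2
        = 2 * ∑ x : Fin n → Fin 2, ∑ i, (max (g x - g (flipBit x i)) 0) ^ 2 := by
      rw [Finset.sum_comm]
      conv_rhs => rw [Finset.sum_comm]
      rw [Finset.mul_sum]
      apply Finset.sum_congr rfl
      intro i _
      have e1 : ∑ x : Fin n → Fin 2, (g x - g (flipBit x i)) ^ 2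
          = ∑ x : Fin n → Fin 2, ((max (g x - g (flipBit x i)) 0) ^ 2
              + (max (g (flipBit x i) - g x) 0) ^ 2) := by
        apply Finset.sum_congr rfl
        intro x _
        rw [sq_decomp (g x - g (flipBit x i))]
        ring_nf
      rw [e1, Finset.sum_add_distrib]
      have e2 : ∑ x : Fin n → Fin 2, (max (g (flipBit x i) - g x) 0) ^ 2
          = ∑ x : Fin n → Fin 2, (max (g x - g (flipBit x i)) 0) ^ 2 := by
        have := sum_flipBit i (fun z => (max (g z - g (flipBit z i)) 0) ^ 2)
        simp only [flipBit_flipBit] at this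
        exact this
      rw [e2]
      ring
    rw [s2]
    have s3 : ∑ x : Fin n → Fin 2, ∑ i, (max (g x - g (flipBit x i)) 0) ^ 2 ≤ v * Bc := by
      refine le_trans (Finset.sum_le_sum (fun x _ => hgrad x)) ?_
      rw [← Finset.mul_sum, hsum_ind]
    linarith
  -- lower bounds on LHS of htens
  have hphi : -Real.exp (-1) * Bc ≤ ∑ x : Fin n → Fin 2, φr (g x ^ 2) := by
    have : ∀ x : Fin n → Fin 2, -Real.exp (-1) * (if K < f x then (1:ℝ) else 0) ≤ φr (g x ^ 2) := by
      intro x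
      by_cases hx : K < f x
      · rw [if_pos hx, mul_one]
        exact φr_ge (sq_nonneg _)
      · rw [if_neg hx, mul_zero, hgzero x hx]
        rw [show (0:ℝ) ^ 2 = 0 by ring, φr_zero]
    calc -Real.exp (-1) * Bc
        = ∑ x : Fin n → Fin 2, -Real.exp (-1) * (if K < f x then (1:ℝ) else 0) := by
          rw [← Finset.mul_sum, hsum_ind]
      _ ≤ ∑ x : Fin n → Fin 2, φr (g x ^ 2) := Finset.sum_le_sum (fun x _ => this x)
  have hAT : Ac ≤ T := by
    have e1 : Ac = ∑ x ∈ Finset.univ.filter (fun x : Fin n → Fin 2 => K + 1 ≤ f x), g x ^ 2 := by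
      rw [hAc]
      rw [Finset.card_eq_sum_ones]
      push_cast
      apply Finset.sum_congr rfl
      intro x hx
      rw [Finset.mem_filter] at hx
      rw [hgone x hx.2]
      norm_num
    rw [e1, hT]
    exact Finset.sum_le_sum_of_subset_of_nonneg (Finset.filter_subset _ _)
      (fun x _ _ => sq_nonneg _)
  have hTB : T ≤ Bc := by
    rw [hT, ← hsum_ind]
    apply Finset.sum_le_sum
    intro x _
    by_cases hx : K < f x
    · rw [if_pos hx]
      nlinarith [hg0 x, hg1 x]
    · rw [if_neg hx, hgzero x hx]
      norm_num
  have hAc0 : 0 ≤ Ac := by rw [hAc]; positivity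
  -- combine
  have hmain : T * ((n : ℝ) * Real.log 2 - Real.log T) ≤ 2 * v * Bc + Real.exp (-1) * Bc := by
    nlinarith [htens, hphi, hup]
  have hmono2 : Ac * ((n : ℝ) * Real.log 2 - Real.log Bc) ≤ T * ((n : ℝ) * Real.log 2 - Real.log T) := by
    rcases eq_or_lt_of_le (le_trans hAc0 hAT) with hT0 | hT0
    · rw [← hT0]
      have : Ac = 0 := le_antisymm (by rw [hT0]; exact hAT) hAc0
      rw [this]
      simp
    · have hBpos : 0 < Bc := lt_of_lt_of_le hT0 hTB
      have hBle : Bc ≤ 2 ^ n := by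
        rw [hBc]
        have h1 := Finset.card_filter_le (Finset.univ : Finset (Fin n → Fin 2))
          (fun x : Fin n → Fin 2 => K < f x)
        rw [Finset.card_univ] at h1
        have h2 : (Fintype.card (Fin n → Fin 2)) = 2 ^ n := by
          rw [Fintype.card_fun, Fintype.card_fin, Fintype.card_fin]
        calc ((Finset.univ.filter (fun x : Fin n → Fin 2 => K < f x)).card : ℝ)
            ≤ (Fintype.card (Fin n → Fin 2) : ℝ) := by exact_mod_cast h1
          _ = 2 ^ n := by rw [h2]; push_cast; ring
      have hlogB : Real.log Bc ≤ (n : ℝ) * Real.log 2 := by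
        calc Real.log Bc ≤ Real.log (2 ^ n) := Real.log_le_log hBpos hBle
          _ = (n : ℝ) * Real.log 2 := Real.log_pow 2 n
      have hlogT : Real.log T ≤ Real.log Bc := Real.log_le_log hT0 hTB
      calc Ac * ((n : ℝ) * Real.log 2 - Real.log Bc)
          ≤ T * ((n : ℝ) * Real.log 2 - Real.log Bc) :=
            mul_le_mul_of_nonneg_right hAT (by linarith)
        _ ≤ T * ((n : ℝ) * Real.log 2 - Real.log T) :=
            mul_le_mul_of_nonneg_left (by linarith) (le_of_lt hT0)
  calc Ac * ((n : ℝ) * Real.log 2 - Real.log Bc)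
      ≤ T * ((n : ℝ) * Real.log 2 - Real.log T) := hmono2
    _ ≤ 2 * v * Bc + Real.exp (-1) * Bc := hmain
    _ = Bc * (2 * v + Real.exp (-1)) := by ring

end Clamp

section Numerics

lemma exp_neg_one_lt : Real.exp (-1) < 0.368 := by
  rw [Real.exp_neg]
  rw [inv_lt_comm₀ (Real.exp_pos 1) (by norm_num)]
  have := Real.exp_one_gt_d9
  nlinarith

lemma small_v_bound {v : ℝ} (hv : 0 < v) (hv30 : v ≤ 1/30) :
    Real.exp (-(1/(4*v))) ≤ v / 2 := by
  have hv2 : (0:ℝ) < v / 2 := by linarith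
  rw [show v / 2 = Real.exp (Real.log (v/2)) from (Real.exp_log hv2).symm]
  apply Real.exp_le_exp.2
  rw [Real.log_div (ne_of_gt hv) two_ne_zero]
  -- goal: -(1/(4v)) ≤ log v - log 2
  have h30 : (0:ℝ) < 1/(30*v) := by positivity
  have h1 : Real.log (1/v) = Real.log 30 + Real.log (1/(30*v)) := by
    rw [← Real.log_mul (by norm_num) (ne_of_gt h30)]
    congr 1
    field_simp
  have h2 : Real.log (1/(30*v)) ≤ 1/(30*v) - 1 := Real.log_le_sub_one_of_pos h30
  have h3 : Real.log 30 ≤ 5 * Real.log 2 := by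
    calc Real.log 30 ≤ Real.log 32 := Real.log_le_log (by norm_num) (by norm_num)
      _ = 5 * Real.log 2 := by
        rw [show (32:ℝ) = 2 ^ 5 by norm_num, Real.log_pow]
        norm_num
  have h4 : Real.log 2 < 0.6931472 := Real.log_two_lt_d9.trans (by norm_num)
  have h5 : Real.log (1/v) = -Real.log v := by
    rw [one_div, Real.log_inv]
  have h6 : (3.16:ℝ) ≤ 13/(60*v) := by
    rw [le_div_iff₀ (by positivity)]
    nlinarith
  have h7 : 1/(4*v) = 1/(30*v) + 13/(60*v) := by
    field_simp
    ring
  linarith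

end Numerics

lemma prb_nonneg {n : ℕ} (P : (Fin n → Fin 2) → Prop) : 0 ≤ prb P := by
  unfold prb; positivity

lemma prb_mono {n : ℕ} {P Q : (Fin n → Fin 2) → Prop} (h : ∀ x, P x → Q x) :
    prb P ≤ prb Q := by
  unfold prb
  have hcard : (Finset.univ.filter P).card ≤ (Finset.univ.filter Q).card := by
    apply Finset.card_le_card
    intro x hx
    rw [Finset.mem_filter] at hx ⊢
    exact ⟨hx.1, h x hx.2⟩
  exact div_le_div_of_nonneg_right (by exact_mod_cast hcard) (by positivity)

end Stmt5Aux

open Stmt5Aux in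
set_option maxHeartbeats 2000000 in
theorem stmt_5' {n : ℕ} (f : (Fin n → Fin 2) → ℝ) (v : ℝ) (hv : 0 < v)
    (hcond : ∀ x, ∑ i, (max (f x - f (flipBit x i)) 0) ^ 2 ≤ v)
    (q : ℤ → ℝ) (hq : ∀ j, q j = prb fun x => (j : ℝ) ≤ f x ∧ f x < (j : ℝ) + 1)
    (k : ℤ) (hk : expecb f + (25 / Real.sqrt 5) * v ≤ (k : ℝ)) :
    q (k + 1) ≤ q k := by
  classical
  have hm0' : expecb f = (∑ x : Fin n → Fin 2, f x) / 2 ^ n := rfl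
  set m0 : ℝ := expecb f with hm0
  set s : ℝ := (k : ℝ) - m0 with hs
  have hsqrt5 : (0:ℝ) < Real.sqrt 5 := Real.sqrt_pos.2 (by norm_num)
  have hc2 : (25 / Real.sqrt 5) ^ 2 = 125 := by
    rw [div_pow, Real.sq_sqrt (by norm_num : (0:ℝ) ≤ 5)]
    norm_num
  have hslb : 25 / Real.sqrt 5 * v ≤ s := by rw [hs]; linarith
  have hspos : 0 < s := lt_of_lt_of_le (by positivity) hslb
  have hs2 : 125 * v ^ 2 ≤ s ^ 2 := by
    have h1 : (25 / Real.sqrt 5 * v) ^ 2 ≤ s ^ 2 :=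
      pow_le_pow_left₀ (by positivity) hslb 2
    rw [mul_pow, hc2] at h1
    linarith
  set aa : ℝ := prb (fun x : Fin n → Fin 2 => (k:ℝ) + 1 ≤ f x) with haa
  set bb : ℝ := prb (fun x : Fin n → Fin 2 => (k:ℝ) ≤ f x) with hbb
  set bb' : ℝ := prb (fun x : Fin n → Fin 2 => (k:ℝ) < f x) with hbb'
  have haa0 : 0 ≤ aa := prb_nonneg _
  have hbb0 : 0 ≤ bb := prb_nonneg _
  have hbb'0 : 0 ≤ bb' := prb_nonneg _
  have haabb' : aa ≤ bb' := prb_mono (fun x hx => by linarith)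
  have hbb'bb : bb' ≤ bb := prb_mono (fun x hx => le_of_lt hx)
  -- splitting of q k
  have hqk : q k = bb - aa := by
    rw [hq k]
    have hcards := Finset.card_filter_add_card_filter_not
      (s := Finset.univ.filter (fun x : Fin n → Fin 2 => (k:ℝ) ≤ f x))
      (p := fun x : Fin n → Fin 2 => f x < (k:ℝ) + 1)
    rw [Finset.filter_filter, Finset.filter_filter] at hcards
    have hcong : Finset.univ.filter (fun x : Fin n → Fin 2 => (k:ℝ) ≤ f x ∧ ¬ f x < (k:ℝ) + 1)
        = Finset.univ.filter (fun x : Fin n → Fin 2 => (k:ℝ) + 1 ≤ f x) := by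
      apply Finset.filter_congr
      intro x _
      constructor
      · intro hx
        exact not_lt.1 hx.2
      · intro hx
        exact ⟨by linarith, not_lt.2 hx⟩
    rw [hcong] at hcards
    have hreal : ((Finset.univ.filter (fun x : Fin n → Fin 2 => (k:ℝ) ≤ f x ∧ f x < (k:ℝ) + 1)).card : ℝ)
        + ((Finset.univ.filter (fun x : Fin n → Fin 2 => (k:ℝ) + 1 ≤ f x)).card : ℝ)
        = ((Finset.univ.filter (fun x : Fin n → Fin 2 => (k:ℝ) ≤ f x)).card : ℝ) := by
      exact_mod_cast hcards
    rw [hbb, haa]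
    unfold prb
    rw [div_sub_div_same, show ((Finset.univ.filter (fun x : Fin n → Fin 2 => (k:ℝ) ≤ f x)).card : ℝ)
      = ((Finset.univ.filter (fun x : Fin n → Fin 2 => (k:ℝ) ≤ f x ∧ f x < (k:ℝ) + 1)).card : ℝ)
        + ((Finset.univ.filter (fun x : Fin n → Fin 2 => (k:ℝ) + 1 ≤ f x)).card : ℝ) from hreal.symm]
    ring
  -- Chernoff bounds
  have hcherk : bb ≤ Real.exp (-(s^2/(4*v))) := by
    have hch := chernoff f v hcond (k:ℝ) (s/(2*v)) (by positivity)
    rw [← hbb] at hch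
    have hexpeq : s/(2*v) * ((∑ x : Fin n → Fin 2, f x) / 2 ^ n) + v * (s/(2*v))^2
        - s/(2*v) * (k:ℝ) = -(s^2/(4*v)) := by
      rw [← hm0', show (k:ℝ) = m0 + s by rw [hs]; ring]
      field_simp
      ring
    rw [hexpeq] at hch
    exact hch
  have hcherk1 : aa ≤ Real.exp (-((s+1)^2/(4*v))) := by
    have hch := chernoff f v hcond ((k:ℝ) + 1) ((s+1)/(2*v)) (by positivity)
    rw [← haa] at hch
    have hexpeq : (s+1)/(2*v) * ((∑ x : Fin n → Fin 2, f x) / 2 ^ n) + v * ((s+1)/(2*v))^2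
        - (s+1)/(2*v) * ((k:ℝ) + 1) = -((s+1)^2/(4*v)) := by
      rw [← hm0', show (k:ℝ) = m0 + s by rw [hs]; ring]
      field_simp
      ring
    rw [hexpeq] at hch
    exact hch
  have haexp : aa ≤ Real.exp (-(1/(4*v))) := by
    refine le_trans hcherk1 (Real.exp_le_exp.2 ?_)
    have h1 : (1:ℝ) ≤ (s+1)^2 := by nlinarith
    have h2 : 1/(4*v) ≤ (s+1)^2/(4*v) :=
      div_le_div_of_nonneg_right h1 (by positivity)
    linarith
  have h2a : 2 * aa ≤ bb := by
    by_cases hcase : v ≤ 1/30 ∧ v ≤ bb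
    · have h1 : aa ≤ v/2 := le_trans haexp (small_v_bound hv hcase.1)
      linarith [hcase.2]
    · rcases eq_or_lt_of_le hbb'0 with hz | hbb'pos
      · linarith [haabb']
      · have hbbpos : 0 < bb := lt_of_lt_of_le hbb'pos hbb'bb
        have hlogbb : Real.log bb ≤ -(s^2/(4*v)) := by
          calc Real.log bb ≤ Real.log (Real.exp (-(s^2/(4*v)))) :=
                Real.log_le_log hbbpos hcherk
            _ = -(s^2/(4*v)) := Real.log_exp _
        have hloghb' : Real.log bb' ≤ Real.log bb := Real.log_le_log hbb'pos hbb'bb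
        have hexp1 := exp_neg_one_lt
        have hexp1' : (0:ℝ) < Real.exp (-1) := Real.exp_pos _
        have hCND : 2 * (2*v + Real.exp (-1)) ≤ -(Real.log bb') := by
          by_cases hv30 : v ≤ 1/30
          · push_neg at hcase
            have hbbv : bb < v := hcase hv30
            have h1 : Real.log bb' ≤ Real.log v :=
              le_trans hloghb' (Real.log_le_log hbbpos (le_of_lt hbbv))
            have h2 : Real.log 30 ≤ -(Real.log v) := by
              have h30 : (30:ℝ) ≤ 1/v := by rw [le_div_iff₀ hv]; linarith
              calc Real.log 30 ≤ Real.log (1/v) := Real.log_le_log (by norm_num) h30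
                _ = -Real.log v := by rw [one_div, Real.log_inv]
            have h3 : (2.772:ℝ) ≤ Real.log 30 := by
              have hl2 := Real.log_two_gt_d9
              calc (2.772:ℝ) ≤ 4 * Real.log 2 := by nlinarith
                _ = Real.log 16 := by
                    rw [show (16:ℝ) = 2^4 by norm_num, Real.log_pow]
                    norm_num
                _ ≤ Real.log 30 := Real.log_le_log (by norm_num) (by norm_num)
            linarith
          · push_neg at hv30
            have h1 : s^2/(4*v) ≤ -(Real.log bb') := by linarith
            have h2 : 125 * v / 4 ≤ s^2/(4*v) := by
              rw [div_le_div_iff₀ (by norm_num) (by positivity)]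
              nlinarith
            linarith
        have hclamp := clamp_entropy f v hcond (k:ℝ)
        have hpow : (0:ℝ) < 2 ^ n := by positivity
        have hAc : ((Finset.univ.filter (fun x : Fin n → Fin 2 => (k:ℝ) + 1 ≤ f x)).card : ℝ)
            = aa * 2^n := by
          rw [haa]; unfold prb; rw [div_mul_cancel₀ _ (ne_of_gt hpow)]
        have hBcc : ((Finset.univ.filter (fun x : Fin n → Fin 2 => (k:ℝ) < f x)).card : ℝ)
            = bb' * 2^n := by
          rw [hbb']; unfold prb; rw [div_mul_cancel₀ _ (ne_of_gt hpow)]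
        rw [hAc, hBcc] at hclamp
        have hlogBc : Real.log (bb' * 2^n) = Real.log bb' + n * Real.log 2 := by
          rw [Real.log_mul (ne_of_gt hbb'pos) (by positivity), Real.log_pow]
        rw [hlogBc] at hclamp
        have hclamp2 : aa * (-(Real.log bb')) ≤ bb' * (2*v + Real.exp (-1)) := by
          have hh2 : (aa * (-(Real.log bb'))) * 2^n
              ≤ (bb' * (2*v + Real.exp (-1))) * 2^n := by
            calc (aa * (-(Real.log bb'))) * 2^n
                = aa * 2^n * ((n:ℝ) * Real.log 2 - (Real.log bb' + n * Real.log 2)) := by ring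
              _ ≤ bb' * 2^n * (2*v + Real.exp (-1)) := hclamp
              _ = (bb' * (2*v + Real.exp (-1))) * 2^n := by ring
          exact (mul_le_mul_iff_of_pos_right hpow).1 hh2
        have hYpos : (0:ℝ) < 2*v + Real.exp (-1) := by positivity
        have hfin : aa * (2 * (2*v + Real.exp (-1))) ≤ bb' * (2*v + Real.exp (-1)) :=
          le_trans (mul_le_mul_of_nonneg_left hCND haa0) hclamp2
        have h2ab : 2*aa ≤ bb' := by nlinarith
        linarith
  have hqk1 : q (k+1) ≤ aa := by
    rw [hq (k+1), haa]
    apply prb_mono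
    intro x hx
    push_cast at hx
    linarith [hx.1]
  linarith

theorem stmt_5 {n : ℕ} (f : (Fin n → Fin 2) → ℝ) (v : ℝ) (hv : 0 < v)
    (hcond : ∀ x, ∑ i, (max (f x - f (flipBit x i)) 0) ^ 2 ≤ v)
    (q : ℤ → ℝ) (hq : ∀ j, q j = prb fun x => (j : ℝ) ≤ f x ∧ f x < (j : ℝ) + 1)
    (k : ℤ) (hk : expecb f + (25 / Real.sqrt 5) * v ≤ (k : ℝ)) :
    q (k + 1) ≤ q k := by
  exact stmt_5' f v hv hcond q hq k hk
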